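/- Let (ρ_x)_{x∈{0,1}³} be eight 4×4 density matrices such that each of the quadruples {ρ₀₀₀, ρ₀₁₁, ρ₁₀₁, ρ₁₁₀} and {ρ₀₀₁, ρ₀₁₀, ρ₁₀₀, ρ₁₁₁} consists of pairwise orthogonal rank-one orthogonal projections summing to I₄. Then for all dichotomic observables B₁, B₂, B₃ on ℂ⁴, the correlation function Δ = Σ_{y=1}^{3} Tr[(N_y − M_y) B_y] satisfies Δ ≤ 8√6. -/

import Mathlib

open Matrix
open scoped ComplexOrder

noncomputable section

abbrev Mat4 := Matrix (Fin 4) (Fin 4) ℂ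

/-- parity of x₁+x₂+x₃ (addition in Fin 2 is mod 2). -/
def par (x : Fin 3 → Fin 2) : Fin 2 := x 0 + x 1 + x 2

def Mop (ρ : (Fin 3 → Fin 2) → Mat4) : Fin 3 → Mat4 :=
  ![-ρ ![0, 0, 0] - ρ ![0, 1, 1] + ρ ![1, 0, 1] + ρ ![1, 1, 0],
    -ρ ![0, 0, 0] + ρ ![0, 1, 1] - ρ ![1, 0, 1] + ρ ![1, 1, 0],
    -ρ ![0, 0, 0] + ρ ![0, 1, 1] + ρ ![1, 0, 1] - ρ ![1, 1, 0]]

def Nop (ρ : (Fin 3 → Fin 2) → Mat4) : Fin 3 → Mat4 :=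
  ![ρ ![0, 0, 1] + ρ ![0, 1, 0] - ρ ![1, 0, 0] - ρ ![1, 1, 1],
    ρ ![0, 0, 1] - ρ ![0, 1, 0] + ρ ![1, 0, 0] - ρ ![1, 1, 1],
    -ρ ![0, 0, 1] + ρ ![0, 1, 0] + ρ ![1, 0, 0] - ρ ![1, 1, 1]]


lemma trace_mul_expand (X Y : Mat4) : (X * Y).trace = ∑ i, ∑ j, X i j * Y j i := by
  simp [Matrix.trace, Matrix.diag, Matrix.mul_apply]

lemma trace_mul_self_re (X : Mat4) (hX : X.IsHermitian) :
    ((X * X).trace).re = ∑ i, ∑ j, ‖X i j‖ ^ 2 := by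
  rw [trace_mul_expand, Complex.re_sum]
  refine Finset.sum_congr rfl fun i _ => ?_
  rw [Complex.re_sum]
  refine Finset.sum_congr rfl fun j _ => ?_
  rw [← hX.apply j i, Complex.star_def, Complex.mul_conj, Complex.ofReal_re, Complex.sq_norm]

lemma trace_mul_re_le (X Y : Mat4) (hX : X.IsHermitian) (hY : Y.IsHermitian) :
    ((X * Y).trace).re ≤ Real.sqrt (((X * X).trace).re) * Real.sqrt (((Y * Y).trace).re) := by
  calc ((X * Y).trace).re = ∑ p : Fin 4 × Fin 4, (X p.1 p.2 * Y p.2 p.1).re := by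
        rw [trace_mul_expand, Complex.re_sum, ← Finset.univ_product_univ, Finset.sum_product]
        exact Finset.sum_congr rfl fun i _ => Complex.re_sum _ _
    _ ≤ ∑ p : Fin 4 × Fin 4, ‖X p.1 p.2‖ * ‖Y p.1 p.2‖ := by
        refine Finset.sum_le_sum fun p _ => ?_
        have h := Complex.re_le_norm (X p.1 p.2 * Y p.2 p.1)
        rw [norm_mul] at h
        have habs : ‖Y p.2 p.1‖ = ‖Y p.1 p.2‖ := by
          rw [← hY.apply p.1 p.2, Complex.star_def, Complex.norm_conj]
        rw [habs] at h
        exact h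
    _ ≤ Real.sqrt (∑ p : Fin 4 × Fin 4, ‖X p.1 p.2‖ ^ 2) *
          Real.sqrt (∑ p : Fin 4 × Fin 4, ‖Y p.1 p.2‖ ^ 2) :=
        Real.sum_mul_le_sqrt_mul_sqrt _ _ _
    _ = _ := by
        rw [trace_mul_self_re X hX, trace_mul_self_re Y hY, ← Finset.univ_product_univ,
          Finset.sum_product, Finset.sum_product]

lemma trace_mul_im (X Y : Mat4) (hX : X.IsHermitian) (hY : Y.IsHermitian) :
    ((X * Y).trace).im = 0 := by
  have h : (starRingEnd ℂ) ((X * Y).trace) = (X * Y).trace := by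
    show star ((X * Y).trace) = (X * Y).trace
    rw [← Matrix.trace_conjTranspose, Matrix.conjTranspose_mul, hX.eq, hY.eq,
      Matrix.trace_mul_comm]
  exact Complex.conj_eq_iff_im.mp h

lemma psd_trace_nonneg {A : Mat4} (hA : A.PosSemidef) : 0 ≤ A.trace := by
  rw [Matrix.trace]
  refine Finset.sum_nonneg fun i _ => ?_
  have := hA.dotProduct_mulVec_nonneg (Pi.single i 1)
  simpa [dotProduct, Pi.single_apply, apply_ite, ite_mul, Finset.sum_ite_eq] using this

lemma trace_proj_mul_nonneg {P Q : Mat4} (hP : P.PosSemidef) (hPP : P * P = P)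
    (hQ : Q.PosSemidef) : 0 ≤ ((P * Q).trace).re := by
  have h1 : (P * Q * P).PosSemidef := by
    have := hQ.conjTranspose_mul_mul_same P
    rwa [hP.1.eq] at this
  have h2 : (P * Q).trace = (P * Q * P).trace := by
    conv_lhs => rw [← hPP]
    rw [Matrix.mul_assoc, Matrix.trace_mul_comm]
  have h3 := psd_trace_nonneg h1
  rw [h2]
  simpa using (Complex.le_def.mp h3).1

lemma endgame (q1 q2 q3 t1 t2 t3 r1 r2 r3 : ℝ)
    (hq1 : q1 = 8 - 2 * t1) (hq2 : q2 = 8 - 2 * t2) (hq3 : q3 = 8 - 2 * t3)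
    (hq1n : 0 ≤ q1) (hq2n : 0 ≤ q2) (hq3n : 0 ≤ q3)
    (ht : -4 ≤ t1 + t2 + t3)
    (hr1 : r1 ≤ Real.sqrt q1 * 2) (hr2 : r2 ≤ Real.sqrt q2 * 2)
    (hr3 : r3 ≤ Real.sqrt q3 * 2) :
    r1 + r2 + r3 ≤ 8 * Real.sqrt 6 := by
  set s1 := Real.sqrt q1 with hs1
  set s2 := Real.sqrt q2 with hs2
  set s3 := Real.sqrt q3 with hs3
  have hs1n : 0 ≤ s1 := Real.sqrt_nonneg _
  have hs2n : 0 ≤ s2 := Real.sqrt_nonneg _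
  have hs3n : 0 ≤ s3 := Real.sqrt_nonneg _
  have hs1sq : s1 ^ 2 = q1 := Real.sq_sqrt hq1n
  have hs2sq : s2 ^ 2 = q2 := Real.sq_sqrt hq2n
  have hs3sq : s3 ^ 2 = q3 := Real.sq_sqrt hq3n
  have hq : q1 + q2 + q3 ≤ 32 := by linarith
  have hsq : (s1 + s2 + s3) ^ 2 ≤ 96 := by
    have h12 := sq_nonneg (s1 - s2)
    have h13 := sq_nonneg (s1 - s3)
    have h23 := sq_nonneg (s2 - s3)
    nlinarith [h12, h13, h23]
  have hmono : Real.sqrt ((s1 + s2 + s3) ^ 2) ≤ Real.sqrt 96 := Real.sqrt_le_sqrt hsq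
  rw [Real.sqrt_sq (by linarith : (0:ℝ) ≤ s1 + s2 + s3)] at hmono
  have h96 : Real.sqrt 96 = 4 * Real.sqrt 6 := by
    rw [show (96:ℝ) = 4 ^ 2 * 6 by norm_num, Real.sqrt_mul (by positivity),
      Real.sqrt_sq (by norm_num : (0:ℝ) ≤ 4)]
  linarith

set_option maxHeartbeats 2000000 in
lemma helper (A0 A1 A2 A3 C0 C1 C2 C3 B1 B2 B3 : Mat4)
    (hA0 : A0.PosSemidef) (hA1 : A1.PosSemidef) (hA2 : A2.PosSemidef) (hA3 : A3.PosSemidef)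
    (hC0 : C0.PosSemidef) (hC1 : C1.PosSemidef) (hC2 : C2.PosSemidef) (hC3 : C3.PosSemidef)
    (pA0 : A0 * A0 = A0) (pA1 : A1 * A1 = A1) (pA2 : A2 * A2 = A2) (pA3 : A3 * A3 = A3)
    (pC0 : C0 * C0 = C0) (pC1 : C1 * C1 = C1) (pC2 : C2 * C2 = C2) (pC3 : C3 * C3 = C3)
    (oA01 : A0 * A1 = 0) (oA10 : A1 * A0 = 0) (oA02 : A0 * A2 = 0) (oA20 : A2 * A0 = 0)
    (oA03 : A0 * A3 = 0) (oA30 : A3 * A0 = 0) (oA12 : A1 * A2 = 0) (oA21 : A2 * A1 = 0)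
    (oA13 : A1 * A3 = 0) (oA31 : A3 * A1 = 0) (oA23 : A2 * A3 = 0) (oA32 : A3 * A2 = 0)
    (oC01 : C0 * C1 = 0) (oC10 : C1 * C0 = 0) (oC02 : C0 * C2 = 0) (oC20 : C2 * C0 = 0)
    (oC03 : C0 * C3 = 0) (oC30 : C3 * C0 = 0) (oC12 : C1 * C2 = 0) (oC21 : C2 * C1 = 0)
    (oC13 : C1 * C3 = 0) (oC31 : C3 * C1 = 0) (oC23 : C2 * C3 = 0) (oC32 : C3 * C2 = 0)
    (hsA : A0 + A1 + A2 + A3 = 1) (hsC : C0 + C1 + C2 + C3 = 1)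
    (hB1 : B1.IsHermitian) (hB2 : B2.IsHermitian) (hB3 : B3.IsHermitian)
    (sB1 : B1 * B1 = 1) (sB2 : B2 * B2 = 1) (sB3 : B3 * B3 = 1) :
    ((C0 + C1 - C2 - C3 - (-A0 - A1 + A2 + A3)) * B1).trace
      + ((C0 - C1 + C2 - C3 - (-A0 + A1 - A2 + A3)) * B2).trace
      + ((-C0 + C1 + C2 - C3 - (-A0 + A1 + A2 - A3)) * B3).trace
      ≤ ((8 * Real.sqrt 6 : ℝ) : ℂ) := by
  set M1 : Mat4 := -A0 - A1 + A2 + A3 with hM1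
  set M2 : Mat4 := -A0 + A1 - A2 + A3 with hM2
  set M3 : Mat4 := -A0 + A1 + A2 - A3 with hM3
  set N1 : Mat4 := C0 + C1 - C2 - C3 with hN1
  set N2 : Mat4 := C0 - C1 + C2 - C3 with hN2
  set N3 : Mat4 := -C0 + C1 + C2 - C3 with hN3
  have hM1h : M1.IsHermitian := ((hA0.1.neg.sub hA1.1).add hA2.1).add hA3.1
  have hM2h : M2.IsHermitian := ((hA0.1.neg.add hA1.1).sub hA2.1).add hA3.1
  have hM3h : M3.IsHermitian := ((hA0.1.neg.add hA1.1).add hA2.1).sub hA3.1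
  have hN1h : N1.IsHermitian := ((hC0.1.add hC1.1).sub hC2.1).sub hC3.1
  have hN2h : N2.IsHermitian := ((hC0.1.sub hC1.1).add hC2.1).sub hC3.1
  have hN3h : N3.IsHermitian := ((hC0.1.neg.add hC1.1).add hC2.1).sub hC3.1
  -- squares are the identity
  have sM1 : M1 * M1 = 1 := by
    have e : M1 * M1 = (A0*A0 + A1*A1 + A2*A2 + A3*A3)
        + (A0*A1 + A1*A0) + (A2*A3 + A3*A2)
        - (A0*A2 + A2*A0) - (A0*A3 + A3*A0) - (A1*A2 + A2*A1) - (A1*A3 + A3*A1) := by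
      rw [hM1]; noncomm_ring
    rw [e, oA01, oA10, oA23, oA32, oA02, oA20, oA03, oA30, oA12, oA21, oA13, oA31,
      pA0, pA1, pA2, pA3]
    simp only [add_zero, sub_zero]
    exact hsA
  have sM2 : M2 * M2 = 1 := by
    have e : M2 * M2 = (A0*A0 + A1*A1 + A2*A2 + A3*A3)
        + (A0*A2 + A2*A0) + (A1*A3 + A3*A1)
        - (A0*A1 + A1*A0) - (A0*A3 + A3*A0) - (A1*A2 + A2*A1) - (A2*A3 + A3*A2) := by
      rw [hM2]; noncomm_ring
    rw [e, oA01, oA10, oA23, oA32, oA02, oA20, oA03, oA30, oA12, oA21, oA13, oA31,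
      pA0, pA1, pA2, pA3]
    simp only [add_zero, sub_zero]
    exact hsA
  have sM3 : M3 * M3 = 1 := by
    have e : M3 * M3 = (A0*A0 + A1*A1 + A2*A2 + A3*A3)
        + (A0*A3 + A3*A0) + (A1*A2 + A2*A1)
        - (A0*A1 + A1*A0) - (A0*A2 + A2*A0) - (A1*A3 + A3*A1) - (A2*A3 + A3*A2) := by
      rw [hM3]; noncomm_ring
    rw [e, oA01, oA10, oA23, oA32, oA02, oA20, oA03, oA30, oA12, oA21, oA13, oA31,
      pA0, pA1, pA2, pA3]
    simp only [add_zero, sub_zero]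
    exact hsA
  have sN1 : N1 * N1 = 1 := by
    have e : N1 * N1 = (C0*C0 + C1*C1 + C2*C2 + C3*C3)
        + (C0*C1 + C1*C0) + (C2*C3 + C3*C2)
        - (C0*C2 + C2*C0) - (C0*C3 + C3*C0) - (C1*C2 + C2*C1) - (C1*C3 + C3*C1) := by
      rw [hN1]; noncomm_ring
    rw [e, oC01, oC10, oC23, oC32, oC02, oC20, oC03, oC30, oC12, oC21, oC13, oC31,
      pC0, pC1, pC2, pC3]
    simp only [add_zero, sub_zero]
    exact hsC
  have sN2 : N2 * N2 = 1 := by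
    have e : N2 * N2 = (C0*C0 + C1*C1 + C2*C2 + C3*C3)
        + (C0*C2 + C2*C0) + (C1*C3 + C3*C1)
        - (C0*C1 + C1*C0) - (C0*C3 + C3*C0) - (C1*C2 + C2*C1) - (C2*C3 + C3*C2) := by
      rw [hN2]; noncomm_ring
    rw [e, oC01, oC10, oC23, oC32, oC02, oC20, oC03, oC30, oC12, oC21, oC13, oC31,
      pC0, pC1, pC2, pC3]
    simp only [add_zero, sub_zero]
    exact hsC
  have sN3 : N3 * N3 = 1 := by
    have e : N3 * N3 = (C0*C0 + C1*C1 + C2*C2 + C3*C3)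
        + (C0*C3 + C3*C0) + (C1*C2 + C2*C1)
        - (C0*C1 + C1*C0) - (C0*C2 + C2*C0) - (C1*C3 + C3*C1) - (C2*C3 + C3*C2) := by
      rw [hN3]; noncomm_ring
    rw [e, oC01, oC10, oC23, oC32, oC02, oC20, oC03, oC30, oC12, oC21, oC13, oC31,
      pC0, pC1, pC2, pC3]
    simp only [add_zero, sub_zero]
    exact hsC
  -- the key trace identity
  have tId0 : M1 * N1 + M2 * N2 + M3 * N3 + (A0 + A1 + A2 + A3) * (C0 + C1 + C2 + C3) =
      (A0*C3 + A1*C2 + A2*C1 + A3*C0) + (A0*C3 + A1*C2 + A2*C1 + A3*C0)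
        + (A0*C3 + A1*C2 + A2*C1 + A3*C0) + (A0*C3 + A1*C2 + A2*C1 + A3*C0) := by
    rw [hM1, hM2, hM3, hN1, hN2, hN3]; noncomm_ring
  rw [hsA, hsC, one_mul] at tId0
  have tTr := congrArg Matrix.trace tId0
  simp only [Matrix.trace_add, Matrix.trace_one] at tTr
  have tTrRe := congrArg Complex.re tTr
  simp only [Complex.add_re, Complex.natCast_re, Fintype.card_fin, Nat.cast_ofNat, Complex.re_ofNat] at tTrRe
  have w0 : 0 ≤ ((A0*C3).trace).re := trace_proj_mul_nonneg hA0 pA0 hC3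
  have w1 : 0 ≤ ((A1*C2).trace).re := trace_proj_mul_nonneg hA1 pA1 hC2
  have w2 : 0 ≤ ((A2*C1).trace).re := trace_proj_mul_nonneg hA2 pA2 hC1
  have w3 : 0 ≤ ((A3*C0).trace).re := trace_proj_mul_nonneg hA3 pA3 hC0
  have tbound : -4 ≤ ((M1*N1).trace).re + ((M2*N2).trace).re + ((M3*N3).trace).re := by
    linarith [tTrRe, w0, w1, w2, w3]
  -- the squared differences
  have hX1h : (N1 - M1).IsHermitian := hN1h.sub hM1h
  have hX2h : (N2 - M2).IsHermitian := hN2h.sub hM2h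
  have hX3h : (N3 - M3).IsHermitian := hN3h.sub hM3h
  have qTr : ∀ (Nn Mm : Mat4), Nn * Nn = 1 → Mm * Mm = 1 →
      (((Nn - Mm) * (Nn - Mm)).trace) = 8 - 2 * ((Mm * Nn).trace) := by
    intro Nn Mm hNn hMm
    have e : (Nn - Mm) * (Nn - Mm) = Nn * Nn - Nn * Mm - Mm * Nn + Mm * Mm := by noncomm_ring
    rw [e, hNn, hMm]
    simp only [Matrix.trace_add, Matrix.trace_sub, Matrix.trace_one, Fintype.card_fin,
      Nat.cast_ofNat]
    rw [Matrix.trace_mul_comm Nn Mm]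
    ring
  have qRe : ∀ (Nn Mm : Mat4), (((Nn - Mm) * (Nn - Mm)).trace) = 8 - 2 * ((Mm * Nn).trace) →
      (((Nn - Mm) * (Nn - Mm)).trace).re = 8 - 2 * ((Mm * Nn).trace).re := by
    intro Nn Mm h
    rw [h]
    simp [Complex.sub_re, Complex.mul_re]
  have q1 := qRe N1 M1 (qTr N1 M1 sN1 sM1)
  have q2 := qRe N2 M2 (qTr N2 M2 sN2 sM2)
  have q3 := qRe N3 M3 (qTr N3 M3 sN3 sM3)
  have q1n : 0 ≤ (((N1 - M1) * (N1 - M1)).trace).re := by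
    rw [trace_mul_self_re _ hX1h]; positivity
  have q2n : 0 ≤ (((N2 - M2) * (N2 - M2)).trace).re := by
    rw [trace_mul_self_re _ hX2h]; positivity
  have q3n : 0 ≤ (((N3 - M3) * (N3 - M3)).trace).re := by
    rw [trace_mul_self_re _ hX3h]; positivity
  -- Cauchy-Schwarz bounds
  have sqrt4 : Real.sqrt ((4:ℂ).re) = 2 := by
    norm_num
  have rle : ∀ (Xx Bb : Mat4), Xx.IsHermitian → Bb.IsHermitian → Bb * Bb = 1 →
      ((Xx * Bb).trace).re ≤ Real.sqrt (((Xx * Xx).trace).re) * 2 := by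
    intro Xx Bb hXx hBb hBb2
    have h := trace_mul_re_le Xx Bb hXx hBb
    rw [hBb2] at h
    rw [show ((1 : Mat4).trace) = (4:ℂ) by
      simp [Matrix.trace_one]] at h
    rwa [sqrt4] at h
  have r1 := rle (N1 - M1) B1 hX1h hB1 sB1
  have r2 := rle (N2 - M2) B2 hX2h hB2 sB2
  have r3 := rle (N3 - M3) B3 hX3h hB3 sB3
  -- imaginary parts vanish
  have i1 := trace_mul_im (N1 - M1) B1 hX1h hB1
  have i2 := trace_mul_im (N2 - M2) B2 hX2h hB2
  have i3 := trace_mul_im (N3 - M3) B3 hX3h hB3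
  rw [Complex.le_def]
  constructor
  · simp only [Complex.add_re, Complex.ofReal_re]
    generalize hq1 : (((N1 - M1) * (N1 - M1)).trace).re = q1v at r1 q1 q1n
    generalize hq2 : (((N2 - M2) * (N2 - M2)).trace).re = q2v at r2 q2 q2n
    generalize hq3 : (((N3 - M3) * (N3 - M3)).trace).re = q3v at r3 q3 q3n
    generalize ht1 : ((M1 * N1).trace).re = t1v at q1 tbound
    generalize ht2 : ((M2 * N2).trace).re = t2v at q2 tbound
    generalize ht3 : ((M3 * N3).trace).re = t3v at q3 tbound
    generalize hr1 : (((N1 - M1) * B1).trace).re = r1v at r1 ⊢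
    generalize hr2 : (((N2 - M2) * B2).trace).re = r2v at r2 ⊢
    generalize hr3 : (((N3 - M3) * B3).trace).re = r3v at r3 ⊢
    exact endgame q1v q2v q3v t1v t2v t3v r1v r2v r3v q1 q2 q3 q1n q2n q3n tbound r1 r2 r3
  · simp only [Complex.add_im, Complex.ofReal_im, i1, i2, i3]
    norm_num

/-- If each parity class of the eight density matrices consists of pairwise
orthogonal rank-one projections summing to I₄, then for any dichotomic
observables B₁, B₂, B₃ the correlation Δ = Σ_y Tr[(N_y − M_y)B_y] ≤ 8√6. -/
theorem correlation_bound
    (ρ : (Fin 3 → Fin 2) → Mat4)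
    (hρ : ∀ x, (ρ x).PosSemidef)
    (hρtr : ∀ x, (ρ x).trace = 1)
    (hproj : ∀ x, ρ x * ρ x = ρ x)
    (horth : ∀ x x', x ≠ x' → par x = par x' → ρ x * ρ x' = 0)
    (hsum0 : ρ ![0, 0, 0] + ρ ![0, 1, 1] + ρ ![1, 0, 1] + ρ ![1, 1, 0] = 1)
    (hsum1 : ρ ![0, 0, 1] + ρ ![0, 1, 0] + ρ ![1, 0, 0] + ρ ![1, 1, 1] = 1)
    (B : Fin 3 → Mat4)
    (hB : ∀ y, (B y).IsHermitian)
    (hB2 : ∀ y, B y * B y = 1) :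
    ∑ y : Fin 3, ((Nop ρ y - Mop ρ y) * B y).trace
      ≤ ((8 * Real.sqrt 6 : ℝ) : ℂ) := by
  have key := helper (ρ ![0, 0, 0]) (ρ ![0, 1, 1]) (ρ ![1, 0, 1]) (ρ ![1, 1, 0]) (ρ ![0, 0, 1]) (ρ ![0, 1, 0]) (ρ ![1, 0, 0]) (ρ ![1, 1, 1]) (B 0) (B 1) (B 2)
      (hρ _) (hρ _) (hρ _) (hρ _) (hρ _) (hρ _) (hρ _) (hρ _)
      (hproj _) (hproj _) (hproj _) (hproj _) (hproj _) (hproj _) (hproj _) (hproj _)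
      (horth ![0, 0, 0] ![0, 1, 1] (by decide) (by decide))
      (horth ![0, 1, 1] ![0, 0, 0] (by decide) (by decide))
      (horth ![0, 0, 0] ![1, 0, 1] (by decide) (by decide))
      (horth ![1, 0, 1] ![0, 0, 0] (by decide) (by decide))
      (horth ![0, 0, 0] ![1, 1, 0] (by decide) (by decide))
      (horth ![1, 1, 0] ![0, 0, 0] (by decide) (by decide))
      (horth ![0, 1, 1] ![1, 0, 1] (by decide) (by decide))
      (horth ![1, 0, 1] ![0, 1, 1] (by decide) (by decide))
      (horth ![0, 1, 1] ![1, 1, 0] (by decide) (by decide))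
      (horth ![1, 1, 0] ![0, 1, 1] (by decide) (by decide))
      (horth ![1, 0, 1] ![1, 1, 0] (by decide) (by decide))
      (horth ![1, 1, 0] ![1, 0, 1] (by decide) (by decide))
      (horth ![0, 0, 1] ![0, 1, 0] (by decide) (by decide))
      (horth ![0, 1, 0] ![0, 0, 1] (by decide) (by decide))
      (horth ![0, 0, 1] ![1, 0, 0] (by decide) (by decide))
      (horth ![1, 0, 0] ![0, 0, 1] (by decide) (by decide))
      (horth ![0, 0, 1] ![1, 1, 1] (by decide) (by decide))
      (horth ![1, 1, 1] ![0, 0, 1] (by decide) (by decide))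
      (horth ![0, 1, 0] ![1, 0, 0] (by decide) (by decide))
      (horth ![1, 0, 0] ![0, 1, 0] (by decide) (by decide))
      (horth ![0, 1, 0] ![1, 1, 1] (by decide) (by decide))
      (horth ![1, 1, 1] ![0, 1, 0] (by decide) (by decide))
      (horth ![1, 0, 0] ![1, 1, 1] (by decide) (by decide))
      (horth ![1, 1, 1] ![1, 0, 0] (by decide) (by decide))
      hsum0 hsum1 (hB 0) (hB 1) (hB 2) (hB2 0) (hB2 1) (hB2 2)
  rw [Fin.sum_univ_three]
  simp only [Mop, Nop, Matrix.cons_val_zero, Matrix.cons_val_one, Matrix.head_cons,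
    Matrix.cons_val_two, Matrix.tail_cons]
  exact key
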